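/- Let A be an n-by-n weighted shift matrix (n ≥ 3) with weights a_1, …, a_n ∈ ℂ. Then for all x, y, z ∈ ℂ, det(x·Re A + y·Im A + z·I_n) = z^n + Σ_{r=1}^{⌊n/2⌋} S_r(|a_1|², …, |a_n|²)·(x² + y²)^r·(−1/4)^r·z^{n−2r} + ((−1)^{n+1}/2^n)·( (x − iy)^n·(a_1⋯a_n) + (x + iy)^n·(conj(a_1)⋯conj(a_n)) ), where Re A = (A + A*)/2 and Im A = (A − A*)/(2i). -/

import Mathlib

open Matrix

/-- The n-by-n weighted shift matrix with weights `a 0, …, a (n-1)`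
(representing `a_1, …, a_n`): the `(i, i+1)` entry is `a i` (cyclically). -/
def wsMatrix {n : ℕ} (a : Fin n → ℂ) : Matrix (Fin n) (Fin n) ℂ :=
  fun i j => if (j : ℕ) = ((i : ℕ) + 1) % n then a i else 0

/-- Two square complex matrices are unitarily equivalent if `B = U* A U`
for some unitary `U`. -/
def UnitarilyEquiv {n : ℕ} (A B : Matrix (Fin n) (Fin n) ℂ) : Prop :=
  ∃ U : Matrix (Fin n) (Fin n) ℂ, U ∈ Matrix.unitaryGroup (Fin n) ℂ ∧ B = Uᴴ * A * U

/-- The circularly symmetric function `S_r(c_1, …, c_N)`: the sum, over all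
`r`-element subsets of the cyclically ordered index set `{1, …, N}` containing
no two cyclically adjacent indices, of the products of the corresponding `c`'s.
(`S_0 = 1`, and `S_r = 0` when no such subset exists.) -/
noncomputable def Scirc {N : ℕ} (r : ℕ) (c : Fin N → ℂ) : ℂ :=
  ∑ s ∈ Finset.univ.filter
      (fun s : Finset (Fin N) =>
        s.card = r ∧ ∀ i ∈ s, ∀ j ∈ s, ((i : ℕ) + 1) % N ≠ (j : ℕ)),
    ∏ i ∈ s, c i

namespace Stmt17
open Matrix Equiv Finset
open Fin.CommRing
variable {n : ℕ} [NeZero n]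

variable {n : ℕ} [NeZero n]

lemma one_ne (hn : 3 ≤ n) : (1 : Fin n) ≠ 0 := by
  simp [Fin.ext_iff, Fin.val_one', Nat.mod_eq_of_lt (by omega : 1 < n)]

lemma two_ne (hn : 3 ≤ n) : (2 : Fin n) ≠ 0 := by
  have h2 : ((2 : Fin n) : ℕ) = 2 % n := by norm_cast
  simp [Fin.ext_iff, h2, Nat.mod_eq_of_lt (by omega : 2 < n)]

lemma succ_ne (hn : 3 ≤ n) (i : Fin n) : i + 1 ≠ i := fun h =>
  one_ne hn (by linear_combination (norm := abel) h)

lemma pred_ne (hn : 3 ≤ n) (i : Fin n) : i - 1 ≠ i := fun h =>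
  one_ne hn (by linear_combination (norm := abel) -h)

lemma succ_ne_pred (hn : 3 ≤ n) (i : Fin n) : i + 1 ≠ i - 1 := fun h =>
  two_ne hn (by
    have h2 : (2 : Fin n) = 1 + 1 := by norm_num
    rw [h2]; linear_combination (norm := abel) h)

lemma cond_iff (hn : 3 ≤ n) (p q : Fin n) : ((q : ℕ) = ((p : ℕ) + 1) % n) ↔ q = p + 1 := by
  rw [Fin.ext_iff, Fin.val_add, Fin.val_one', Nat.mod_eq_of_lt (by omega : 1 < n)]

noncomputable def Mmat (a : Fin n → ℂ) (x y z : ℂ) : Matrix (Fin n) (Fin n) ℂ :=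
  x • ((1 / 2 : ℂ) • (wsMatrix a + (wsMatrix a)ᴴ)) +
    y • ((1 / (2 * Complex.I) : ℂ) • (wsMatrix a - (wsMatrix a)ᴴ)) +
    z • (1 : Matrix (Fin n) (Fin n) ℂ)

noncomputable def al (x y : ℂ) : ℂ := (x - Complex.I * y) / 2
noncomputable def be (x y : ℂ) : ℂ := (x + Complex.I * y) / 2

lemma ws_apply (hn : 3 ≤ n) (a : Fin n → ℂ) (p q : Fin n) :
    wsMatrix a p q = if q = p + 1 then a p else 0 := by
  rw [wsMatrix]; simp only [cond_iff hn]

lemma wsH_apply (hn : 3 ≤ n) (a : Fin n → ℂ) (p q : Fin n) :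
    (wsMatrix a)ᴴ p q = if q = p - 1 then (starRingEnd ℂ) (a (p - 1)) else 0 := by
  rw [conjTranspose_apply, ws_apply hn]
  by_cases h : p = q + 1
  · have hq : q = p - 1 := by linear_combination (norm := abel) -h
    rw [if_pos h, if_pos hq, ← hq, starRingEnd_apply]
  · rw [if_neg h, star_zero, if_neg fun hc => h (by linear_combination (norm := abel) -hc)]

lemma invI : (1 / (2 * Complex.I) : ℂ) = -Complex.I / 2 := by
  rw [div_eq_div_iff (by simp [Complex.I_ne_zero]) two_ne_zero]
  linear_combination 2 * Complex.I_sq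

lemma Mmat_apply (hn : 3 ≤ n) (a : Fin n → ℂ) (x y z : ℂ) (p q : Fin n) :
    Mmat a x y z p q =
      if q = p + 1 then al x y * a p
      else if q = p - 1 then be x y * (starRingEnd ℂ) (a (p - 1))
      else if q = p then z else 0 := by
  simp only [Mmat, Matrix.add_apply, Matrix.smul_apply, Matrix.sub_apply, one_apply, smul_eq_mul,
    ws_apply hn, wsH_apply hn, invI]
  by_cases h1 : q = p + 1
  · subst h1
    simp only [succ_ne_pred hn p, Ne.symm (succ_ne hn p), eq_self_iff_true, if_true, if_false]
    rw [al]; ring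
  · simp only [h1, if_false]
    by_cases h2 : q = p - 1
    · subst h2
      simp only [Ne.symm (pred_ne hn p), eq_self_iff_true, if_true, if_false]
      rw [be]; ring
    · simp only [h2, if_false]
      by_cases h3 : q = p
      · subst h3
        simp only [eq_self_iff_true, if_true]; ring
      · simp only [h3, Ne.symm h3, if_false]; ring


variable {n : ℕ} [NeZero n]

def adjFree (s : Finset (Fin n)) : Prop := ∀ i ∈ s, i + 1 ∉ s

lemma adjFree_mono {s t : Finset (Fin n)} (h : t ⊆ s) (hs : adjFree s) : adjFree t :=
  fun i hi hc => hs i (h hi) (h hc)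

def sFun (s : Finset (Fin n)) (i : Fin n) : Fin n :=
  if i ∈ s then i + 1 else if i - 1 ∈ s then i - 1 else i

lemma sub_add (i : Fin n) : i - 1 + 1 = i := by ring
lemma add_sub (i : Fin n) : i + 1 - 1 = i := by ring

lemma sFun_invol (hn : 3 ≤ n) {s : Finset (Fin n)} (hs : adjFree s) :
    Function.Involutive (sFun s) := by
  intro i
  by_cases h1 : i ∈ s
  · have e : sFun s i = i + 1 := by rw [sFun, if_pos h1]
    rw [e, sFun, if_neg (hs i h1), if_pos (by rwa [add_sub]), add_sub]
  · by_cases h2 : i - 1 ∈ s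
    · have e : sFun s i = i - 1 := by rw [sFun, if_neg h1, if_pos h2]
      rw [e, sFun, if_pos h2, sub_add]
    · have e : sFun s i = i := by rw [sFun, if_neg h1, if_neg h2]
      rw [e, e]

open scoped Classical in
noncomputable def sPerm (s : Finset (Fin n)) : Equiv.Perm (Fin n) :=
  if h : Function.Involutive (sFun s) then h.toPerm else 1

lemma sPerm_apply (hn : 3 ≤ n) {s : Finset (Fin n)} (hs : adjFree s) (i : Fin n) :
    sPerm s i = sFun s i := by
  classical
  rw [sPerm]
  rw [dif_pos (sFun_invol hn hs)]
  rfl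

lemma sPerm_invol (hn : 3 ≤ n) {s : Finset (Fin n)} (hs : adjFree s) (i : Fin n) :
    sPerm s (sPerm s i) = i := by
  rw [sPerm_apply hn hs, sPerm_apply hn hs]; exact sFun_invol hn hs i

lemma sPerm_mem (hn : 3 ≤ n) {s : Finset (Fin n)} (hs : adjFree s) {i : Fin n} (hi : i ∈ s) :
    sPerm s i = i + 1 := by rw [sPerm_apply hn hs, sFun, if_pos hi]

lemma sPerm_mem' (hn : 3 ≤ n) {s : Finset (Fin n)} (hs : adjFree s) {i : Fin n} (hi : i ∈ s) :
    sPerm s (i + 1) = i := by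
  rw [sPerm_apply hn hs, sFun, if_neg (hs i hi), if_pos (by rwa [add_sub]), add_sub]

lemma sPerm_not (hn : 3 ≤ n) {s : Finset (Fin n)} (hs : adjFree s) {i : Fin n}
    (h1 : i ∉ s) (h2 : i - 1 ∉ s) : sPerm s i = i := by
  rw [sPerm_apply hn hs, sFun, if_neg h1, if_neg h2]

lemma mem_iff_sPerm (hn : 3 ≤ n) {s : Finset (Fin n)} (hs : adjFree s) (i : Fin n) :
    i ∈ s ↔ sPerm s i = i + 1 := by
  constructor
  · exact fun hi => sPerm_mem hn hs hi
  · intro h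
    by_contra h1
    rw [sPerm_apply hn hs, sFun, if_neg h1] at h
    by_cases h2 : i - 1 ∈ s
    · rw [if_pos h2] at h; exact succ_ne_pred hn i h.symm
    · rw [if_neg h2] at h; exact succ_ne hn i h.symm

lemma sPerm_injOn (hn : 3 ≤ n) {s t : Finset (Fin n)} (hs : adjFree s) (ht : adjFree t)
    (h : sPerm s = sPerm t) : s = t := by
  ext i
  rw [mem_iff_sPerm hn hs, mem_iff_sPerm hn ht, h]

lemma sPerm_eq_swap_mul (hn : 3 ≤ n) {s : Finset (Fin n)} (hs : adjFree s) {i : Fin n}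
    (hi : i ∈ s) : sPerm s = Equiv.swap i (i + 1) * sPerm (s.erase i) := by
  have hse : adjFree (s.erase i) := adjFree_mono (erase_subset i s) hs
  have him : i - 1 ∉ s := fun hc => (sub_add i ▸ hs (i - 1) hc) hi
  refine Equiv.ext fun j => ?_
  rw [Equiv.Perm.mul_apply]
  by_cases hj1 : j = i
  · subst hj1
    rw [sPerm_mem hn hs hi, sPerm_not hn hse (fun hc => (Finset.mem_erase.mp hc).1 rfl)
        (fun hc => him (Finset.mem_erase.mp hc).2), Equiv.swap_apply_left]
  · by_cases hj2 : j = i + 1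
    · subst hj2
      rw [sPerm_mem' hn hs hi, sPerm_not hn hse
          (fun hc => hs i hi (Finset.mem_erase.mp hc).2)
          (fun hc => (Finset.mem_erase.mp hc).1 (add_sub i)), Equiv.swap_apply_right]
    · have he : sPerm (s.erase i) j = sPerm s j := by
        rw [sPerm_apply hn hse, sPerm_apply hn hs, sFun, sFun]
        have e1 : (j ∈ s.erase i) ↔ (j ∈ s) := by
          rw [Finset.mem_erase]; exact ⟨fun h => h.2, fun h => ⟨hj1, h⟩⟩
        have e2 : (j - 1 ∈ s.erase i) ↔ (j - 1 ∈ s) := by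
          rw [Finset.mem_erase]
          exact ⟨fun h => h.2, fun h => ⟨fun hc => hj2 (by rw [← hc, sub_add]), h⟩⟩
        by_cases hj : j ∈ s
        · rw [if_pos hj, if_pos (e1.mpr hj)]
        · rw [if_neg hj, if_neg (fun hc => hj (e1.mp hc))]
          by_cases hj' : j - 1 ∈ s
          · rw [if_pos hj', if_pos (e2.mpr hj')]
          · rw [if_neg hj', if_neg (fun hc => hj' (e2.mp hc))]
      rw [he]
      refine (Equiv.swap_apply_of_ne_of_ne ?_ ?_).symm
      · intro hc
        by_cases hj : j ∈ s
        · rw [sPerm_mem hn hs hj] at hc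
          exact hs j hj (hc ▸ hi)
        · by_cases hj' : j - 1 ∈ s
          · rw [sPerm_apply hn hs, sFun, if_neg hj, if_pos hj'] at hc
            exact hj2 (by rw [← hc, sub_add])
          · rw [sPerm_not hn hs hj hj'] at hc; exact hj1 hc
      · intro hc
        by_cases hj : j ∈ s
        · rw [sPerm_mem hn hs hj] at hc
          exact hj1 (by linear_combination (norm := abel) hc)
        · by_cases hj' : j - 1 ∈ s
          · rw [sPerm_apply hn hs, sFun, if_neg hj, if_pos hj'] at hc
            exact hs i hi (hc ▸ hj')
          · rw [sPerm_not hn hs hj hj'] at hc; exact hj2 hc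

lemma sPerm_empty (hn : 3 ≤ n) : sPerm (∅ : Finset (Fin n)) = 1 := by
  refine Equiv.ext fun j => ?_
  rw [sPerm_not hn (fun i hi => absurd hi (Finset.notMem_empty i))
    (Finset.notMem_empty j) (Finset.notMem_empty _)]
  rfl

lemma sign_sPerm (hn : 3 ≤ n) (s : Finset (Fin n)) (hs : adjFree s) :
    Equiv.Perm.sign (sPerm s) = (-1) ^ s.card := by
  induction s using Finset.strongInduction with
  | _ s ih =>
    rcases s.eq_empty_or_nonempty with rfl | ⟨i, hi⟩
    · simp [sPerm_empty hn]
    · rw [sPerm_eq_swap_mul hn hs hi, Equiv.Perm.sign_mul,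
        Equiv.Perm.sign_swap (Ne.symm (succ_ne hn i)),
        ih (s.erase i) (Finset.erase_ssubset hi) (adjFree_mono (erase_subset i s) hs),
        Finset.card_erase_of_mem hi]
      conv_rhs => rw [show s.card = (s.card - 1) + 1 from
        (Nat.succ_pred_eq_of_pos (Finset.card_pos.mpr ⟨i, hi⟩)).symm]
      rw [pow_succ]
      exact mul_comm _ _

lemma sPerm_apply' (hn : 3 ≤ n) {s : Finset (Fin n)} (hs : adjFree s) {i : Fin n}
    (h1 : i ∉ s) (h2 : i - 1 ∈ s) : sPerm s i = i - 1 := by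
  rw [sPerm_apply hn hs, sFun, if_neg h1, if_pos h2]

variable {n : ℕ} [NeZero n]

lemma eq_rot (hn : 3 ≤ n) {σ : Equiv.Perm (Fin n)}
    (hσ : ∀ i, σ i = i ∨ σ i = i + 1 ∨ σ i = i - 1)
    {i : Fin n} (h1 : σ i = i + 1) (h2 : σ (i + 1) ≠ i) : ∀ j, σ j = j + 1 := by
  have key : ∀ k : ℕ, σ (i + (k : Fin n)) = i + (k : Fin n) + 1 ∧
      σ (i + (k : Fin n) + 1) = i + (k : Fin n) + 2 := by
    intro k
    induction k with
    | zero =>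
      refine ⟨by simpa using h1, ?_⟩
      have e0 : ((0 : ℕ) : Fin n) = 0 := by norm_cast
      rw [e0, add_zero]
      rcases hσ (i + 1) with h | h | h
      · exact absurd (σ.injective (h1.trans h.symm))
          fun hc => succ_ne hn i (by linear_combination -hc)
      · rw [h]; ring
      · exact absurd (h.trans (add_sub i)) h2
    | succ k ihk =>
      obtain ⟨hk1, hk2⟩ := ihk
      have ec : ((k + 1 : ℕ) : Fin n) = (k : Fin n) + 1 := by push_cast; ring
      rw [ec]
      constructor
      · rw [show i + ((k : Fin n) + 1) = i + (k : Fin n) + 1 from by ring, hk2]; ring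
      · rw [show i + ((k : Fin n) + 1) + 1 = i + (k : Fin n) + 2 from by ring]
        rcases hσ (i + (k : Fin n) + 2) with h | h | h
        · exact absurd (σ.injective (hk2.trans h.symm))
            fun hc => succ_ne hn (i + (k : Fin n) + 1) (by linear_combination -hc)
        · rw [h]; ring
        · rw [show i + (k : Fin n) + 2 - 1 = i + (k : Fin n) + 1 from by ring, ← hk1] at h
          exact absurd (σ.injective h) fun hc => two_ne hn (by linear_combination hc)
  intro j
  have hj := (key ((j - i : Fin n) : ℕ)).1
  rw [Fin.cast_val_eq_self, show i + (j - i) = j from by ring] at hj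
  exact hj

lemma hσ_inv {σ : Equiv.Perm (Fin n)}
    (hσ : ∀ i, σ i = i ∨ σ i = i + 1 ∨ σ i = i - 1) :
    ∀ i, σ⁻¹ i = i ∨ σ⁻¹ i = i + 1 ∨ σ⁻¹ i = i - 1 := by
  intro j
  rcases hσ (σ⁻¹ j) with h | h | h <;> rw [show σ (σ⁻¹ j) = j from σ.apply_symm_apply j] at h
  · exact Or.inl h.symm
  · refine Or.inr (Or.inr ?_); linear_combination -h
  · refine Or.inr (Or.inl ?_); linear_combination -h

lemma classify (hn : 3 ≤ n) {σ : Equiv.Perm (Fin n)}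
    (hσ : ∀ i, σ i = i ∨ σ i = i + 1 ∨ σ i = i - 1) :
    σ = Equiv.addRight (1 : Fin n) ∨ σ = (Equiv.addRight (1 : Fin n))⁻¹ ∨
      ∃ s : Finset (Fin n), adjFree s ∧ σ = sPerm s := by
  by_cases hA : ∃ i, σ i = i + 1 ∧ σ (i + 1) ≠ i
  · obtain ⟨i, h1, h2⟩ := hA
    exact Or.inl (Equiv.ext (eq_rot hn hσ h1 h2))
  by_cases hB : ∃ i, σ i = i - 1 ∧ σ (i - 1) ≠ i
  · obtain ⟨i, h1, h2⟩ := hB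
    refine Or.inr (Or.inl ?_)
    have hinv1 : σ⁻¹ (i - 1) = (i - 1) + 1 := by
      rw [sub_add, ← h1, show σ⁻¹ (σ i) = i from σ.symm_apply_apply i]
    have hinv2 : σ⁻¹ ((i - 1) + 1) ≠ i - 1 := by
      rw [sub_add]
      intro hc
      exact h2 (by rw [← hc, show σ (σ⁻¹ i) = i from σ.apply_symm_apply i])
    have := eq_rot hn (hσ_inv hσ) hinv1 hinv2
    have heq : σ⁻¹ = Equiv.addRight (1 : Fin n) := Equiv.ext this
    rw [← heq, inv_inv]
  push_neg at hA hB
  refine Or.inr (Or.inr ?_)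
  classical
  set s : Finset (Fin n) := univ.filter (fun i => σ i = i + 1) with hsdef
  have hsmem : ∀ i, i ∈ s ↔ σ i = i + 1 := by intro i; simp [hsdef]
  have hs : adjFree s := by
    intro i hi hc
    have e1 : σ (i + 1) = i := hA i ((hsmem i).mp hi)
    have e2 : σ (i + 1) = i + 1 + 1 := (hsmem (i + 1)).mp hc
    exact two_ne hn (by linear_combination e2.symm.trans e1)
  refine ⟨s, hs, Equiv.ext fun j => ?_⟩
  by_cases h1 : j ∈ s
  · rw [sPerm_mem hn hs h1]; exact (hsmem j).mp h1
  · by_cases h2 : j - 1 ∈ s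
    · rw [sPerm_apply' hn hs h1 h2]
      have := hA (j - 1) ((hsmem (j - 1)).mp h2)
      rw [sub_add] at this
      rw [this]
    · rw [sPerm_not hn hs h1 h2]
      rcases hσ j with h | h | h
      · exact h
      · exact absurd ((hsmem j).mpr h) h1
      · exfalso
        apply h2
        apply (hsmem (j - 1)).mpr
        rw [sub_add]
        exact hB j h
variable {n : ℕ} [NeZero n]

variable {a : Fin n → ℂ} {x y z : ℂ}

lemma M_succ (hn : 3 ≤ n) (i : Fin n) :
    Mmat a x y z (i + 1) i = be x y * (starRingEnd ℂ) (a i) := by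
  rw [Mmat_apply hn, if_neg (fun hc => two_ne hn (by linear_combination -hc)),
    if_pos (add_sub i).symm, add_sub]

lemma M_pred (hn : 3 ≤ n) (i : Fin n) :
    Mmat a x y z (i - 1) i = al x y * a (i - 1) := by
  rw [Mmat_apply hn, if_pos (sub_add i).symm]

lemma M_diag (hn : 3 ≤ n) (i : Fin n) : Mmat a x y z i i = z := by
  rw [Mmat_apply hn, if_neg (Ne.symm (succ_ne hn i)), if_neg (Ne.symm (pred_ne hn i)),
    if_pos rfl]

lemma add_one_inj : Function.Injective (fun i : Fin n => i + 1) := fun p q h => by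
  simpa only [add_sub] using congrArg (fun t : Fin n => t - 1) h

lemma prod_rot (hn : 3 ≤ n) :
    ∏ i, Mmat a x y z ((Equiv.addRight (1 : Fin n)) i) i =
      be x y ^ n * ∏ i, (starRingEnd ℂ) (a i) := by
  calc ∏ i, Mmat a x y z ((Equiv.addRight (1 : Fin n)) i) i
      = ∏ i, (be x y * (starRingEnd ℂ) (a i)) :=
        Finset.prod_congr rfl fun i _ => M_succ hn i
    _ = _ := by
        rw [Finset.prod_mul_distrib, Finset.prod_const, card_univ, Fintype.card_fin]

lemma rot_inv_apply (i : Fin n) : (Equiv.addRight (1 : Fin n))⁻¹ i = i - 1 := by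
  rw [sub_eq_add_neg]; rfl

lemma prod_rot_inv (hn : 3 ≤ n) :
    ∏ i, Mmat a x y z ((Equiv.addRight (1 : Fin n))⁻¹ i) i =
      al x y ^ n * ∏ i, a i := by
  calc ∏ i, Mmat a x y z ((Equiv.addRight (1 : Fin n))⁻¹ i) i
      = ∏ i, (al x y * a (i - 1)) :=
        Finset.prod_congr rfl fun i _ => by rw [rot_inv_apply, M_pred hn]
    _ = al x y ^ n * ∏ i, a (i - 1) := by
        rw [Finset.prod_mul_distrib, Finset.prod_const, card_univ, Fintype.card_fin]
    _ = _ := by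
        congr 1
        simpa using Equiv.prod_comp (Equiv.subRight (1 : Fin n)) a

lemma disj_image {s : Finset (Fin n)} (hs : adjFree s) : Disjoint s (s.image (· + 1)) := by
  rw [Finset.disjoint_left]
  intro j hj hj'
  obtain ⟨i, hi, rfl⟩ := Finset.mem_image.mp hj'
  exact hs i hi hj

lemma card_bound {s : Finset (Fin n)} (hs : adjFree s) : s.card ≤ n / 2 := by
  have h1 := Finset.card_le_univ (s ∪ s.image (· + 1))
  rw [Finset.card_union_of_disjoint (disj_image hs),
    Finset.card_image_of_injective _ add_one_inj, Fintype.card_fin] at h1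
  omega

lemma prod_sPerm (hn : 3 ≤ n) {s : Finset (Fin n)} (hs : adjFree s) :
    ∏ i, Mmat a x y z (sPerm s i) i =
      (al x y * be x y) ^ s.card * z ^ (n - 2 * s.card) *
        ∏ i ∈ s, (a i * (starRingEnd ℂ) (a i)) := by
  classical
  have hd := disj_image hs
  have h1 : ∏ i ∈ s, Mmat a x y z (sPerm s i) i = ∏ i ∈ s, (be x y * (starRingEnd ℂ) (a i)) :=
    Finset.prod_congr rfl fun i hi => by rw [sPerm_mem hn hs hi, M_succ hn]
  have h2 : ∏ i ∈ s.image (· + 1), Mmat a x y z (sPerm s i) i = ∏ i ∈ s, (al x y * a i) := by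
    rw [Finset.prod_image (fun p _ q _ h => add_one_inj h)]
    refine Finset.prod_congr rfl fun i hi => ?_
    have hM := M_pred (a := a) (x := x) (y := y) (z := z) hn (i + 1)
    rw [add_sub] at hM
    rw [sPerm_mem' hn hs hi, hM]
  have h3 : ∏ i ∈ (s ∪ s.image (· + 1))ᶜ, Mmat a x y z (sPerm s i) i = z ^ (n - 2 * s.card) := by
    have : ∀ i ∈ (s ∪ s.image (· + 1))ᶜ, Mmat a x y z (sPerm s i) i = z := by
      intro i hi
      rw [Finset.mem_compl, Finset.mem_union] at hi
      push_neg at hi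
      have hns : i - 1 ∉ s := fun hc => hi.2 (Finset.mem_image.mpr ⟨i - 1, hc, sub_add i⟩)
      rw [sPerm_not hn hs hi.1 hns, M_diag hn]
    rw [Finset.prod_congr rfl this, Finset.prod_const, Finset.card_compl,
      Finset.card_union_of_disjoint hd, Finset.card_image_of_injective _ add_one_inj,
      Fintype.card_fin]
    congr 1
    omega
  rw [← Finset.prod_mul_prod_compl (s ∪ s.image (· + 1)), Finset.prod_union hd, h1, h2, h3,
    Finset.prod_mul_distrib, Finset.prod_mul_distrib, Finset.prod_const, Finset.prod_const,
    mul_pow, Finset.prod_mul_distrib]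
  ring

variable {n : ℕ} [NeZero n]

lemma sign_rot (hn : 3 ≤ n) :
    Equiv.Perm.sign (Equiv.addRight (1 : Fin n)) = (-1) ^ (n + 1) := by
  obtain ⟨m, rfl⟩ : ∃ m, n = m + 1 := ⟨n - 1, by omega⟩
  have he : (Equiv.addRight (1 : Fin (m + 1))) = finRotate (m + 1) := by
    refine Equiv.ext fun i => ?_
    rw [finRotate_succ_apply]; rfl
  rw [he, sign_finRotate, Nat.add_sub_cancel, pow_succ, pow_succ, mul_neg_one, mul_neg_one, neg_neg]

lemma natcond_iff (hn : 3 ≤ n) (s : Finset (Fin n)) :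
    (∀ i ∈ s, ∀ j ∈ s, ((i : ℕ) + 1) % n ≠ (j : ℕ)) ↔ adjFree s := by
  constructor
  · intro h i hi hc
    exact h i hi (i + 1) hc ((cond_iff hn i (i + 1)).mpr rfl).symm
  · intro h i hi j hj hc
    have : j = i + 1 := (cond_iff hn i j).mp hc.symm
    exact h i hi (this ▸ hj)

theorem main (hn : 3 ≤ n) (a : Fin n → ℂ) (x y z : ℂ) :
    (Mmat a x y z).det =
      z ^ n +
        (∑ r ∈ Finset.Icc 1 (n / 2),
          Scirc r (fun i : Fin n => (((‖a i‖ : ℝ) : ℂ)) ^ 2) *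
            (x ^ 2 + y ^ 2) ^ r * (-(1 / 4) : ℂ) ^ r * z ^ (n - 2 * r)) +
        ((-1 : ℂ) ^ (n + 1) / 2 ^ n) *
          ((x - Complex.I * y) ^ n * (∏ j, a j) +
            (x + Complex.I * y) ^ n * (∏ j, (starRingEnd ℂ) (a j))) := by
  classical
  set rot : Equiv.Perm (Fin n) := Equiv.addRight (1 : Fin n) with hrotdef
  set V : Finset (Finset (Fin n)) := univ.filter (fun s => adjFree s) with hVdef
  set K : Finset (Equiv.Perm (Fin n)) := insert rot (insert rot⁻¹ (V.image sPerm)) with hKdef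
  have hVmem : ∀ {s : Finset (Fin n)}, s ∈ V ↔ adjFree s := by
    intro s; rw [hVdef, mem_filter]; exact ⟨fun h => h.2, fun h => ⟨mem_univ s, h⟩⟩
  rw [det_apply']
  -- restrict to K
  have hz : ∀ σ ∈ (univ : Finset (Equiv.Perm (Fin n))), σ ∉ K →
      (↑↑(Equiv.Perm.sign σ) : ℂ) * ∏ i, Mmat a x y z (σ i) i = 0 := by
    intro σ _ hσK
    by_cases hσ : ∀ i, σ i = i ∨ σ i = i + 1 ∨ σ i = i - 1
    · exfalso
      apply hσK
      rcases classify hn hσ with h | h | ⟨s, hs, h⟩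
      · rw [h, hKdef]; exact mem_insert_self _ _
      · rw [h, hKdef]; exact mem_insert_of_mem (mem_insert_self _ _)
      · rw [h, hKdef]
        exact mem_insert_of_mem (mem_insert_of_mem
          (mem_image.mpr ⟨s, hVmem.mpr hs, rfl⟩))
    · push_neg at hσ
      obtain ⟨i, hi1, hi2, hi3⟩ := hσ
      have h0 : Mmat a x y z (σ i) i = 0 := by
        rw [Mmat_apply hn, if_neg (fun hc => hi3 (by linear_combination -hc)),
          if_neg (fun hc => hi2 (by linear_combination -hc)),
          if_neg (fun hc => hi1 hc.symm)]
      have hp : ∏ i, Mmat a x y z (σ i) i = 0 := Finset.prod_eq_zero (mem_univ i) h0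
      rw [hp, mul_zero]
  rw [← Finset.sum_subset (Finset.subset_univ K) hz]
  -- distinctness
  have hrr : rot (rot (0 : Fin n)) = (0 : Fin n) + 1 + 1 := rfl
  have hrotim : rot ∉ V.image sPerm := by
    intro h
    obtain ⟨s, hsV, hrot⟩ := mem_image.mp h
    have h0 := sPerm_invol hn (hVmem.mp hsV) (0 : Fin n)
    rw [hrot] at h0
    rw [hrr] at h0
    exact two_ne hn (by linear_combination h0)
  have hrotinvim : rot⁻¹ ∉ V.image sPerm := by
    intro h
    obtain ⟨s, hsV, hrot⟩ := mem_image.mp h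
    have h0 := sPerm_invol hn (hVmem.mp hsV) (0 : Fin n)
    rw [hrot] at h0
    have : rot⁻¹ (rot⁻¹ (0 : Fin n)) = (0 : Fin n) - 1 - 1 := by
      rw [hrotdef]
      have e : ∀ j : Fin n, (Equiv.addRight (1 : Fin n))⁻¹ j = j - 1 := fun j => by
        rw [sub_eq_add_neg]; rfl
      rw [e, e]
    rw [this] at h0
    exact two_ne hn (by linear_combination -h0)
  have hne1 : rot ∉ insert rot⁻¹ (V.image sPerm) := by
    intro h
    rcases mem_insert.mp h with h | h
    · have h0 : rot (rot (0 : Fin n)) = rot⁻¹ (rot (0 : Fin n)) := by rw [← h]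
      rw [show rot⁻¹ (rot (0 : Fin n)) = 0 from rot.symm_apply_apply 0, hrr] at h0
      exact two_ne hn (by linear_combination h0)
    · exact hrotim h
  rw [hKdef, Finset.sum_insert hne1, Finset.sum_insert hrotinvim,
    Finset.sum_image (fun s hs t ht h => sPerm_injOn hn (hVmem.mp hs) (hVmem.mp ht) h)]
  -- evaluate rot terms
  have e1 : (↑↑(Equiv.Perm.sign rot) : ℂ) * ∏ i, Mmat a x y z (rot i) i =
      (-1 : ℂ) ^ (n + 1) * (be x y ^ n * ∏ i, (starRingEnd ℂ) (a i)) := by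
    rw [hrotdef, prod_rot hn, sign_rot hn]
    push_cast
    ring
  have e2 : (↑↑(Equiv.Perm.sign rot⁻¹) : ℂ) * ∏ i, Mmat a x y z (rot⁻¹ i) i =
      (-1 : ℂ) ^ (n + 1) * (al x y ^ n * ∏ i, a i) := by
    rw [hrotdef, prod_rot_inv hn, Equiv.Perm.sign_inv, sign_rot hn]
    push_cast
    ring
  rw [e1, e2]
  -- evaluate sPerm sum
  set g : Finset (Fin n) → ℂ := fun s =>
    (-1 : ℂ) ^ s.card * ((al x y * be x y) ^ s.card * z ^ (n - 2 * s.card) *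
      ∏ i ∈ s, (a i * (starRingEnd ℂ) (a i))) with hgdef
  have e3 : ∑ s ∈ V, (↑↑(Equiv.Perm.sign (sPerm s)) : ℂ) * ∏ i, Mmat a x y z (sPerm s i) i =
      ∑ s ∈ V, g s := by
    refine Finset.sum_congr rfl fun s hsV => ?_
    have hs := hVmem.mp hsV
    rw [prod_sPerm hn hs, sign_sPerm hn s hs, hgdef]
    push_cast
    ring
  rw [e3]
  have hmaps : ∀ s ∈ V, s.card ∈ Finset.range (n / 2 + 1) := fun s hsV =>
    Finset.mem_range.mpr (Nat.lt_succ_of_le (card_bound (hVmem.mp hsV)))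
  rw [← Finset.sum_fiberwise_of_maps_to hmaps g]
  -- fibers
  have habe : al x y * be x y = (x ^ 2 + y ^ 2) / 4 := by
    rw [al, be]
    linear_combination (-(y ^ 2) / 4) * Complex.I_sq
  have hfib : ∀ r : ℕ, ∑ s ∈ V.filter (fun s => s.card = r), g s =
      Scirc r (fun i : Fin n => (((‖a i‖ : ℝ) : ℂ)) ^ 2) *
        (x ^ 2 + y ^ 2) ^ r * (-(1 / 4) : ℂ) ^ r * z ^ (n - 2 * r) := by
    intro r
    have hfil : Finset.univ.filter
        (fun s : Finset (Fin n) =>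
          s.card = r ∧ ∀ i ∈ s, ∀ j ∈ s, ((i : ℕ) + 1) % n ≠ (j : ℕ)) =
        V.filter (fun s => s.card = r) := by
      ext s
      rw [mem_filter, mem_filter]
      constructor
      · rintro ⟨_, hc, hcond⟩
        exact ⟨hVmem.mpr ((natcond_iff hn s).mp hcond), hc⟩
      · rintro ⟨hsV, hc⟩
        exact ⟨mem_univ s, hc, (natcond_iff hn s).mpr (hVmem.mp hsV)⟩
    have hS : Scirc r (fun i : Fin n => (((‖a i‖ : ℝ) : ℂ)) ^ 2) =
        ∑ s ∈ V.filter (fun s => s.card = r), ∏ i ∈ s, (a i * (starRingEnd ℂ) (a i)) := by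
      rw [Scirc]
      refine Finset.sum_congr hfil fun s _ => Finset.prod_congr rfl fun i _ => ?_
      rw [← Complex.ofReal_pow, Complex.sq_norm, ← Complex.mul_conj]
    rw [hS, Finset.sum_mul, Finset.sum_mul, Finset.sum_mul]
    refine Finset.sum_congr rfl fun s hsf => ?_
    have hc : s.card = r := (mem_filter.mp hsf).2
    have hsc : ((-1 : ℂ)) ^ r * ((x ^ 2 + y ^ 2) / 4) ^ r =
        (x ^ 2 + y ^ 2) ^ r * (-(1 / 4) : ℂ) ^ r := by
      rw [← mul_pow, ← mul_pow]; congr 1; ring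
    rw [hgdef]
    simp only [hc, habe]
    linear_combination (z ^ (n - 2 * r) * ∏ i ∈ s, (a i * (starRingEnd ℂ) (a i))) * hsc
  -- split range
  have hsplit : Finset.range (n / 2 + 1) = insert 0 (Finset.Icc 1 (n / 2)) := by
    ext r
    simp only [Finset.mem_range, Finset.mem_insert, Finset.mem_Icc]
    omega
  rw [hsplit, Finset.sum_insert (by simp)]
  have e0 : ∑ s ∈ V.filter (fun s => s.card = 0), g s = z ^ n := by
    have : V.filter (fun s => s.card = 0) = {∅} := by
      ext s
      rw [mem_filter, Finset.mem_singleton, Finset.card_eq_zero]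
      constructor
      · exact fun h => h.2
      · rintro rfl
        exact ⟨hVmem.mpr (fun i hi => absurd hi (Finset.notMem_empty i)), rfl⟩
    rw [this, Finset.sum_singleton, hgdef]
    norm_num
  rw [e0, Finset.sum_congr rfl fun r _ => hfib r]
  rw [al, be, div_pow, div_pow]
  have h2n : ((2 : ℂ) ^ n) ≠ 0 := pow_ne_zero n two_ne_zero
  field_simp
  ring
end Stmt17

theorem stmt17 (n : ℕ) (hn : 3 ≤ n) (a : Fin n → ℂ) (x y z : ℂ) :
    (x • ((1 / 2 : ℂ) • (wsMatrix a + (wsMatrix a)ᴴ)) +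
        y • ((1 / (2 * Complex.I) : ℂ) • (wsMatrix a - (wsMatrix a)ᴴ)) +
        z • (1 : Matrix (Fin n) (Fin n) ℂ)).det =
      z ^ n +
        (∑ r ∈ Finset.Icc 1 (n / 2),
          Scirc r (fun i : Fin n => (((‖a i‖ : ℝ) : ℂ)) ^ 2) *
            (x ^ 2 + y ^ 2) ^ r * (-(1 / 4) : ℂ) ^ r * z ^ (n - 2 * r)) +
        ((-1 : ℂ) ^ (n + 1) / 2 ^ n) *
          ((x - Complex.I * y) ^ n * (∏ j, a j) +
            (x + Complex.I * y) ^ n * (∏ j, (starRingEnd ℂ) (a j))) := by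
  haveI : NeZero n := ⟨by omega⟩
  exact Stmt17.main hn a x y z
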